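/- Let $\Delta t > 0$, $\lambda, \sigma \in \mathbb{R}$, and $V^n, X^n, \bar X, \theta \in \mathbb{R}^d$. For $m \in (0,1)$ set $\gamma = 1 - m$ and $V^{n+1}(m) = \frac{m}{m + \gamma \Delta t} V^n + \frac{\lambda \Delta t}{m + \gamma \Delta t}(\bar X - X^n) + \frac{\sigma \sqrt{\Delta t}}{m + \gamma \Delta t} D(\bar X - X^n)\theta$. Then as $m \to 0^+$, $V^{n+1}(m)$ converges to $\lambda(\bar X - X^n) + \frac{\sigma}{\sqrt{\Delta t}} D(\bar X - X^n)\theta$, and consequently $X^n + \Delta t\, V^{n+1}(m)$ converges to $X^n + \Delta t\, \lambda (\bar X - X^n) + \sqrt{\Delta t}\, \sigma D(\bar X - X^n)\theta$, which is one Euler–Maruyama step for the consensus-based optimization dynamics. -/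

import Mathlib

open Filter

theorem small_inertia_limit_of_scheme (d : ℕ) (Δt lam σ : ℝ) (hΔt : 0 < Δt)
    (V X Xbar θ : Fin d → ℝ) :
    (Tendsto
      (fun m : ℝ =>
        (m / (m + (1 - m) * Δt)) • V
          + (lam * Δt / (m + (1 - m) * Δt)) • (Xbar - X)
          + (σ * Real.sqrt Δt / (m + (1 - m) * Δt)) •
              (Matrix.diagonal (Xbar - X)).mulVec θ)
      (nhdsWithin 0 (Set.Ioo (0:ℝ) 1))
      (nhds (lam • (Xbar - X)
        + (σ / Real.sqrt Δt) • (Matrix.diagonal (Xbar - X)).mulVec θ)))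
    ∧ (Tendsto
      (fun m : ℝ =>
        X + Δt • ((m / (m + (1 - m) * Δt)) • V
          + (lam * Δt / (m + (1 - m) * Δt)) • (Xbar - X)
          + (σ * Real.sqrt Δt / (m + (1 - m) * Δt)) •
              (Matrix.diagonal (Xbar - X)).mulVec θ))
      (nhdsWithin 0 (Set.Ioo (0:ℝ) 1))
      (nhds (X + (Δt * lam) • (Xbar - X)
        + (Real.sqrt Δt * σ) • (Matrix.diagonal (Xbar - X)).mulVec θ))) := by
  have hΔt' : Δt ≠ 0 := ne_of_gt hΔt
  have hs : Real.sqrt Δt ≠ 0 := by positivity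
  have hden : Tendsto (fun m : ℝ => m + (1 - m) * Δt)
      (nhdsWithin 0 (Set.Ioo (0:ℝ) 1)) (nhds Δt) := by
    have : Tendsto (fun m : ℝ => m + (1 - m) * Δt) (nhds 0) (nhds (0 + (1 - 0) * Δt)) := by
      apply Tendsto.add tendsto_id
      exact (Tendsto.sub tendsto_const_nhds tendsto_id).mul tendsto_const_nhds
    simpa using this.mono_left nhdsWithin_le_nhds
  have hnum : Tendsto (fun m : ℝ => m) (nhdsWithin 0 (Set.Ioo (0:ℝ) 1)) (nhds 0) :=
    tendsto_id.mono_left nhdsWithin_le_nhds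
  have h1 : Tendsto (fun m : ℝ => m / (m + (1 - m) * Δt))
      (nhdsWithin 0 (Set.Ioo (0:ℝ) 1)) (nhds 0) := by
    have h := hnum.div hden hΔt'
    rw [zero_div] at h
    exact h
  have h2 : Tendsto (fun m : ℝ => lam * Δt / (m + (1 - m) * Δt))
      (nhdsWithin 0 (Set.Ioo (0:ℝ) 1)) (nhds lam) := by
    have h := (tendsto_const_nhds (x := lam * Δt)
      (f := nhdsWithin (0:ℝ) (Set.Ioo (0:ℝ) 1))).div hden hΔt'
    rw [show lam * Δt / Δt = lam by field_simp] at h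
    exact h
  have h3 : Tendsto (fun m : ℝ => σ * Real.sqrt Δt / (m + (1 - m) * Δt))
      (nhdsWithin 0 (Set.Ioo (0:ℝ) 1)) (nhds (σ / Real.sqrt Δt)) := by
    have := (tendsto_const_nhds (x := σ * Real.sqrt Δt)
      (f := nhdsWithin (0:ℝ) (Set.Ioo (0:ℝ) 1))).div hden hΔt'
    have hmul : Real.sqrt Δt * Real.sqrt Δt = Δt := Real.mul_self_sqrt hΔt.le
    have heq : σ * Real.sqrt Δt / Δt = σ / Real.sqrt Δt := by
      field_simp
      linear_combination σ * hmul
    rwa [heq] at this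
  have main : Tendsto
      (fun m : ℝ =>
        (m / (m + (1 - m) * Δt)) • V
          + (lam * Δt / (m + (1 - m) * Δt)) • (Xbar - X)
          + (σ * Real.sqrt Δt / (m + (1 - m) * Δt)) •
              (Matrix.diagonal (Xbar - X)).mulVec θ)
      (nhdsWithin 0 (Set.Ioo (0:ℝ) 1))
      (nhds (lam • (Xbar - X)
        + (σ / Real.sqrt Δt) • (Matrix.diagonal (Xbar - X)).mulVec θ)) := by
    have := ((h1.smul_const V).add (h2.smul_const (Xbar - X))).add
      (h3.smul_const ((Matrix.diagonal (Xbar - X)).mulVec θ))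
    simpa using this
  refine ⟨main, ?_⟩
  have := (tendsto_const_nhds (x := X)
    (f := nhdsWithin (0:ℝ) (Set.Ioo (0:ℝ) 1))).add
    (main.const_smul Δt)
  have heq : X + Δt • (lam • (Xbar - X)
      + (σ / Real.sqrt Δt) • (Matrix.diagonal (Xbar - X)).mulVec θ)
      = X + (Δt * lam) • (Xbar - X)
        + (Real.sqrt Δt * σ) • (Matrix.diagonal (Xbar - X)).mulVec θ := by
    have hmul : Real.sqrt Δt * Real.sqrt Δt = Δt := Real.mul_self_sqrt hΔt.le
    have hΔ : Δt * (σ / Real.sqrt Δt) = Real.sqrt Δt * σ := by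
      field_simp
      linear_combination -σ * hmul
    rw [smul_add, smul_smul, smul_smul, hΔ, add_assoc]
  rwa [heq] at this
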